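/- arXiv:1712.09798 — 3 statements merged into one kernel-verified Lean document; each statement's English description precedes it below -/
import Mathlib

section
/- If M is a d×d complex matrix with det(M) = 1, then |Tr(M) − d| ≤ (2^d + d!) · ‖M − I‖², where ‖·‖ is the operator norm. -/
open Matrix
open scoped Matrix.Norms.L2Operator Pointwise

private lemma aux1 (ε : ℝ) (hε0 : 0 ≤ ε) (hε1 : ε ≤ 1) :
    ∀ t : Multiset ℂ, (∀ μ ∈ t, ‖μ‖ ≤ ε) →
      ‖(t.map (fun μ => 1 + μ)).prod - 1‖ ≤ ((2 : ℝ) ^ Multiset.card t - 1) * ε := by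
  intro t
  induction t using Multiset.induction_on with
  | empty => simp
  | cons a s ih =>
    intro h
    have ha : ‖a‖ ≤ ε := h a (Multiset.mem_cons_self a s)
    have hs := ih (fun μ hμ => h μ (Multiset.mem_cons_of_mem hμ))
    set P : ℂ := (s.map (fun μ => 1 + μ)).prod with hP
    have h2n : (0 : ℝ) ≤ (2 : ℝ) ^ Multiset.card s - 1 := by
      have : (1 : ℝ) ≤ 2 ^ Multiset.card s := one_le_pow₀ (by norm_num)
      linarith
    have hPnorm : ‖P‖ ≤ (2 : ℝ) ^ Multiset.card s := by
      calc ‖P‖ ≤ ‖P - 1‖ + ‖(1 : ℂ)‖ := by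
            simpa using norm_add_le (P - 1) 1
        _ ≤ ((2 : ℝ) ^ Multiset.card s - 1) * ε + 1 := by simpa using hs
        _ ≤ ((2 : ℝ) ^ Multiset.card s - 1) * 1 + 1 := by nlinarith
        _ = (2 : ℝ) ^ Multiset.card s := by ring
    rw [Multiset.map_cons, Multiset.prod_cons]
    have key : (1 + a) * P - 1 = (P - 1) + a * P := by ring
    rw [key]
    calc ‖(P - 1) + a * P‖
        ≤ ‖P - 1‖ + ‖a * P‖ := norm_add_le _ _
      _ ≤ ((2 : ℝ) ^ Multiset.card s - 1) * ε + ε * (2 : ℝ) ^ Multiset.card s := by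
          have : ‖a * P‖ ≤ ε * (2 : ℝ) ^ Multiset.card s := by
            rw [norm_mul]
            exact mul_le_mul ha hPnorm (norm_nonneg _) hε0
          linarith
      _ = (2 * (2 : ℝ) ^ Multiset.card s - 1) * ε := by ring
      _ = ((2 : ℝ) ^ Multiset.card (a ::ₘ s) - 1) * ε := by
          rw [Multiset.card_cons, pow_succ]; ring

private lemma aux2 (ε : ℝ) (hε0 : 0 ≤ ε) (hε1 : ε ≤ 1) :
    ∀ t : Multiset ℂ, (∀ μ ∈ t, ‖μ‖ ≤ ε) →
      ‖(t.map (fun μ => 1 + μ)).prod - 1 - t.sum‖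
        ≤ ((2 : ℝ) ^ Multiset.card t - 1) * ε ^ 2 := by
  intro t
  induction t using Multiset.induction_on with
  | empty => simp
  | cons a s ih =>
    intro h
    have ha : ‖a‖ ≤ ε := h a (Multiset.mem_cons_self a s)
    have hs := ih (fun μ hμ => h μ (Multiset.mem_cons_of_mem hμ))
    have hs1 := aux1 ε hε0 hε1 s (fun μ hμ => h μ (Multiset.mem_cons_of_mem hμ))
    set P : ℂ := (s.map (fun μ => 1 + μ)).prod with hP
    set S : ℂ := s.sum with hS
    have h2n : (0 : ℝ) ≤ (2 : ℝ) ^ Multiset.card s - 1 := by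
      have : (1 : ℝ) ≤ 2 ^ Multiset.card s := one_le_pow₀ (by norm_num)
      linarith
    rw [Multiset.map_cons, Multiset.prod_cons, Multiset.sum_cons]
    have key : (1 + a) * P - 1 - (a + S) = (P - 1 - S) + a * (P - 1) := by ring
    rw [key]
    calc ‖(P - 1 - S) + a * (P - 1)‖
        ≤ ‖P - 1 - S‖ + ‖a * (P - 1)‖ := norm_add_le _ _
      _ ≤ ((2 : ℝ) ^ Multiset.card s - 1) * ε ^ 2
            + ε * (((2 : ℝ) ^ Multiset.card s - 1) * ε) := by
          have : ‖a * (P - 1)‖ ≤ ε * (((2 : ℝ) ^ Multiset.card s - 1) * ε) := by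
            rw [norm_mul]
            exact mul_le_mul ha hs1 (norm_nonneg _) hε0
          linarith
      _ = (2 * ((2 : ℝ) ^ Multiset.card s - 1)) * ε ^ 2 := by ring
      _ ≤ (2 * (2 : ℝ) ^ Multiset.card s - 1) * ε ^ 2 := by nlinarith [sq_nonneg ε]
      _ = ((2 : ℝ) ^ Multiset.card (a ::ₘ s) - 1) * ε ^ 2 := by
          rw [Multiset.card_cons, pow_succ]; ring

private lemma root_mem_spectrum (d : ℕ) (M : Matrix (Fin d) (Fin d) ℂ) {x : ℂ}
    (hx : x ∈ M.charpoly.roots) : x ∈ spectrum ℂ M := by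
  have hroot : M.charpoly.eval x = 0 := Polynomial.isRoot_of_mem_roots hx
  rw [spectrum.mem_iff, Matrix.isUnit_iff_isUnit_det]
  have hdet : (algebraMap ℂ (Matrix (Fin d) (Fin d) ℂ) x - M).det = M.charpoly.eval x := by
    have h1 : M.charpoly.eval x = ((Polynomial.evalRingHom x).mapMatrix (charmatrix M)).det := by
      rw [Matrix.charpoly, ← RingHom.map_det]; rfl
    rw [h1]
    congr 1
    ext i j
    by_cases hij : i = j
    · subst hij
      simp [charmatrix_apply_eq, RingHom.mapMatrix_apply, Matrix.map_apply,
        Matrix.algebraMap_matrix_apply]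
    · simp [charmatrix_apply_ne _ _ _ hij, RingHom.mapMatrix_apply, Matrix.map_apply,
        Matrix.algebraMap_matrix_apply, hij]
  rw [hdet, hroot]
  exact not_isUnit_zero

private lemma sum_map_sub_one (s : Multiset ℂ) :
    (s.map (fun x => x - 1)).sum = s.sum - (Multiset.card s : ℂ) := by
  induction s using Multiset.induction_on with
  | empty => simp
  | cons a s ih =>
    simp only [Multiset.map_cons, Multiset.sum_cons, Multiset.card_cons, ih]
    push_cast
    ring

/-- If `det M = 1` then `|Tr M − d| ≤ (2^d + d!)·‖M − I‖²` (operator norm). -/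
theorem stmt_2 (d : ℕ) (M : Matrix (Fin d) (Fin d) ℂ) (hM : M.det = 1) :
    ‖M.trace - (d : ℂ)‖ ≤ ((2 : ℝ) ^ d + (d.factorial : ℝ)) * ‖M - 1‖ ^ 2 := by
  rcases Nat.eq_zero_or_pos d with hd | hd
  · subst hd
    simp [Matrix.trace]
  haveI : Nonempty (Fin d) := ⟨⟨0, hd⟩⟩
  haveI : NormOneClass (Matrix (Fin d) (Fin d) ℂ) := by
    constructor
    rw [Matrix.cstar_norm_def, _root_.map_one]
    exact norm_one
  set ε : ℝ := ‖M - 1‖ with hε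
  have hε0 : 0 ≤ ε := norm_nonneg _
  set s : Multiset ℂ := M.charpoly.roots with hsdef
  have hcard : Multiset.card s = d := by
    rw [hsdef]
    rw [(Polynomial.splits_iff_card_roots).mp (IsAlgClosed.splits M.charpoly)]
    rw [Matrix.charpoly_natDegree_eq_dim]
    simp
  have htr : M.trace = s.sum := Matrix.trace_eq_sum_roots_charpoly M
  have hdet2 : s.prod = 1 := by rw [hsdef, ← Matrix.det_eq_prod_roots_charpoly M, hM]
  have hbound : ∀ x ∈ s, ‖x - 1‖ ≤ ε := by
    intro x hx
    have hmem : x - 1 ∈ spectrum ℂ (M - 1) := by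
      have h1 : x ∈ spectrum ℂ M := root_mem_spectrum d M hx
      have h2 : x - 1 ∈ spectrum ℂ M - ({1} : Set ℂ) :=
        Set.sub_mem_sub h1 rfl
      rwa [spectrum.sub_singleton_eq, _root_.map_one] at h2
    have := spectrum.norm_le_norm_of_mem hmem
    simpa using this
  set t : Multiset ℂ := s.map (fun x => x - 1) with htdef
  have ht_card : Multiset.card t = d := by simp [htdef, hcard]
  have ht_sum : t.sum = M.trace - (d : ℂ) := by
    rw [htdef, sum_map_sub_one, hcard, htr]
  have ht_prod : (t.map (fun μ => 1 + μ)).prod = 1 := by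
    rw [htdef, Multiset.map_map]
    have hcong : ∀ x ∈ s, ((fun μ => 1 + μ) ∘ fun x => x - 1) x = id x := by
      intro x _; simp
    rw [Multiset.map_congr rfl hcong, Multiset.map_id, hdet2]
  have ht_bound : ∀ μ ∈ t, ‖μ‖ ≤ ε := by
    intro μ hμ
    obtain ⟨x, hx, rfl⟩ := Multiset.mem_map.mp hμ
    exact hbound x hx
  have hfact : (0 : ℝ) ≤ (d.factorial : ℝ) := by positivity
  have h2d : (0 : ℝ) ≤ (2 : ℝ) ^ d := by positivity
  by_cases hε1 : ε ≤ 1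
  · have key := aux2 ε hε0 hε1 t ht_bound
    rw [ht_prod, ht_card, ht_sum] at key
    have heq : (1 : ℂ) - 1 - (M.trace - (d : ℂ)) = -(M.trace - (d : ℂ)) := by ring
    rw [heq, norm_neg] at key
    refine key.trans ?_
    nlinarith [sq_nonneg ε]
  · push_neg at hε1
    have habs : ‖M.trace - (d : ℂ)‖ ≤ (d : ℝ) * ε := by
      rw [← ht_sum]
      calc ‖t.sum‖ ≤ (t.map (fun μ => ‖μ‖)).sum := by
            simpa using norm_multiset_sum_le t
        _ ≤ Multiset.card (t.map (fun μ => ‖μ‖)) • ε := by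
            apply Multiset.sum_le_card_nsmul
            intro x hx
            obtain ⟨μ, hμ, rfl⟩ := Multiset.mem_map.mp hx
            exact ht_bound μ hμ
        _ = (d : ℝ) * ε := by simp [ht_card, nsmul_eq_mul]
    refine habs.trans ?_
    have hdle : (d : ℝ) ≤ (2 : ℝ) ^ d := by
      exact_mod_cast (Nat.lt_two_pow_self (n := d)).le
    have hεsq : ε ≤ ε ^ 2 := by nlinarith
    calc (d : ℝ) * ε ≤ (2 : ℝ) ^ d * ε := mul_le_mul_of_nonneg_right hdle hε0
      _ ≤ (2 : ℝ) ^ d * ε ^ 2 := mul_le_mul_of_nonneg_left hεsq h2d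
      _ ≤ ((2 : ℝ) ^ d + (d.factorial : ℝ)) * ε ^ 2 := by nlinarith [sq_nonneg ε]
end

section
/- Let G be a finite group with an irreducible unitary representation ρ of dimension d ≥ 2, fix ε₀ := 1/(6|G|(d−1)! + 2|G|²), and define f(W) := ∏_{g∈G} ρ(g) W ρ(g)† (product in some fixed order ending with the identity element). If W ∈ SU(d) satisfies ‖W − I‖ ≤ ε₀, then ‖f(W) − I‖ ≤ (3|G|(d−1)! + |G|²) · ‖W − I‖² ≤ ε₀/2. -/
open Matrix
open scoped Matrix.Norms.L2Operator


lemma pow_aux {ε : ℝ} (hε : 0 ≤ ε) :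
    ∀ n : ℕ, (n : ℝ) ^ 2 * ε ≤ 1 → (1 + ε) ^ n ≤ 1 + n * ε + (n : ℝ) ^ 2 * ε ^ 2 := by
  intro n
  induction n with
  | zero => simp
  | succ n ih =>
    intro h
    have hn : ((n : ℝ)) ^ 2 * ε ≤ 1 := by
      refine le_trans ?_ h
      have : ((n : ℝ)) ^ 2 ≤ ((n + 1 : ℕ) : ℝ) ^ 2 := by
        push_cast; nlinarith [Nat.cast_nonneg (α := ℝ) n]
      nlinarith [Nat.cast_nonneg (α := ℝ) n]
    have IH := ih hn
    have hcast : ((n + 1 : ℕ) : ℝ) = (n : ℝ) + 1 := by push_cast; ring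
    rw [hcast] at h ⊢
    have h1 : (1 + ε) ^ (n + 1) = (1 + ε) ^ n * (1 + ε) := by ring
    have hnn : (0 : ℝ) ≤ (n : ℝ) := Nat.cast_nonneg n
    have key : (n : ℝ) ^ 3 * ε ≤ (n : ℝ) + 1 := by nlinarith
    nlinarith [pow_nonneg (by linarith : (0:ℝ) ≤ 1 + ε) n, sq_nonneg ((n:ℝ) * ε)]

lemma list_prod_one_add_sub_one {R : Type*} [NormedRing R] [NormOneClass R] {ε : ℝ} :
    ∀ L : List R, (∀ A ∈ L, ‖A‖ ≤ ε) →
      ‖(L.map (fun A => 1 + A)).prod - 1‖ ≤ (1 + ε) ^ L.length - 1 := by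
  intro L
  induction L with
  | nil => simp
  | cons A L ih =>
    intro h
    have hA : ‖A‖ ≤ ε := h A (List.mem_cons_self)
    have hε : 0 ≤ ε := le_trans (norm_nonneg _) hA
    have IH := ih (fun B hB => h B (List.mem_cons_of_mem _ hB))
    set Q := (L.map (fun A => 1 + A)).prod with hQ
    have hprod : ((A :: L).map (fun A => 1 + A)).prod = (1 + A) * Q := by
      simp [hQ]
    rw [hprod]
    have hid : (1 + A) * Q - 1 = (Q - 1) + A * Q := by noncomm_ring
    rw [hid]
    have hQn : ‖Q‖ ≤ (1 + ε) ^ L.length := by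
      calc ‖Q‖ ≤ ‖Q - 1‖ + ‖(1 : R)‖ := by
            simpa using norm_add_le (Q - 1) 1
        _ ≤ ((1 + ε) ^ L.length - 1) + 1 := by rw [norm_one]; linarith
        _ = (1 + ε) ^ L.length := by ring
    calc ‖(Q - 1) + A * Q‖ ≤ ‖Q - 1‖ + ‖A‖ * ‖Q‖ :=
          le_trans (norm_add_le _ _) (by gcongr; exact norm_mul_le _ _)
      _ ≤ ((1 + ε) ^ L.length - 1) + ε * (1 + ε) ^ L.length := by
          gcongr
      _ = (1 + ε) ^ (A :: L).length - 1 := by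
          simp only [List.length_cons]; ring

lemma list_prod_one_add_sub_one_sub_sum {R : Type*} [NormedRing R] [NormOneClass R] {ε : ℝ} :
    ∀ L : List R, (∀ A ∈ L, ‖A‖ ≤ ε) →
      ‖(L.map (fun A => 1 + A)).prod - (1 + L.sum)‖
        ≤ (1 + ε) ^ L.length - 1 - L.length * ε := by
  intro L
  induction L with
  | nil => simp
  | cons A L ih =>
    intro h
    have hA : ‖A‖ ≤ ε := h A (List.mem_cons_self)
    have hε : 0 ≤ ε := le_trans (norm_nonneg _) hA
    have IH := ih (fun B hB => h B (List.mem_cons_of_mem _ hB))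
    have hQ1 := list_prod_one_add_sub_one L (fun B hB => h B (List.mem_cons_of_mem _ hB))
    set Q := (L.map (fun A => 1 + A)).prod with hQdef
    have hprod : ((A :: L).map (fun A => 1 + A)).prod = (1 + A) * Q := by
      simp [hQdef]
    have hsum : (A :: L).sum = A + L.sum := by simp
    rw [hprod, hsum]
    have hid : (1 + A) * Q - (1 + (A + L.sum)) = (Q - (1 + L.sum)) + A * (Q - 1) := by noncomm_ring
    rw [hid]
    calc ‖(Q - (1 + L.sum)) + A * (Q - 1)‖ ≤ ‖Q - (1 + L.sum)‖ + ‖A‖ * ‖Q - 1‖ :=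
          le_trans (norm_add_le _ _) (by gcongr; exact norm_mul_le _ _)
      _ ≤ ((1 + ε) ^ L.length - 1 - L.length * ε) + ε * ((1 + ε) ^ L.length - 1) := by gcongr
      _ = (1 + ε) ^ (A :: L).length - 1 - (A :: L).length * ε := by
          simp only [List.length_cons]; push_cast; ring

lemma nat_fact1 : ∀ d : ℕ, 2 ≤ d → 3 * d ^ 2 ≤ 12 * (d - 1).factorial + 4 := by
  intro d hd
  rcases Nat.lt_or_ge d 3 with h3 | h3
  · interval_cases d <;> simp [Nat.factorial]
  · induction d with
    | zero => omega
    | succ n ih =>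
      rcases Nat.lt_or_ge n 3 with hn | hn
      · interval_cases n <;> simp [Nat.factorial] <;> omega
      · have hih := ih (by omega) (by omega)
        have h2 : 2 ≤ (n - 1).factorial := by
          calc 2 = Nat.factorial 2 := rfl
          _ ≤ _ := Nat.factorial_le (by omega)
        have hstep : (n + 1 - 1).factorial = n * (n - 1).factorial := by
          have : n + 1 - 1 = n := rfl
          rw [this, ← Nat.mul_factorial_pred (by omega)]
        rw [hstep]
        nlinarith

lemma nat_fact2 : ∀ d : ℕ, 2 ≤ d → 9 * d ^ 2 ≤ 14 * d.factorial + 13 := by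
  intro d hd
  induction d with
  | zero => omega
  | succ n ih =>
    rcases Nat.lt_or_ge n 2 with hn | hn
    · interval_cases n <;> simp [Nat.factorial] <;> omega
    · have hih := ih hn
      have h2 : 2 ≤ n.factorial := by
        calc 2 = Nat.factorial 2 := rfl
        _ ≤ _ := Nat.factorial_le hn
      rw [Nat.factorial_succ]
      nlinarith

lemma entry_le_l2_opNorm {d : ℕ} (A : Matrix (Fin d) (Fin d) ℂ) (i j : Fin d) :
    ‖A i j‖ ≤ ‖A‖ := by
  have h := A.l2_opNorm_mulVec (EuclideanSpace.single j (1 : ℂ))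
  rw [EuclideanSpace.norm_single, norm_one, mul_one] at h
  refine le_trans ?_ h
  set y : EuclideanSpace ℂ (Fin d) :=
    (EuclideanSpace.equiv (Fin d) ℂ).symm (A *ᵥ (EuclideanSpace.single j (1 : ℂ)))
  have hy : y i = A i j := by
    show (A *ᵥ (EuclideanSpace.single j (1 : ℂ))) i = A i j
    simp [Matrix.mulVec, dotProduct, EuclideanSpace.single_apply]
  calc ‖A i j‖ = Real.sqrt (‖y i‖ ^ 2) := by
        rw [hy, Real.sqrt_sq (norm_nonneg _)]
    _ ≤ ‖y‖ := by
        rw [EuclideanSpace.norm_eq]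
        apply Real.sqrt_le_sqrt
        exact Finset.single_le_sum (f := fun k => ‖y k‖ ^ 2)
          (fun k _ => sq_nonneg _) (Finset.mem_univ i)

lemma trace_bound {d : ℕ} (hd : 2 ≤ d) {E : Matrix (Fin d) (Fin d) ℂ} {ε : ℝ}
    (hε : 0 ≤ ε) (h1 : (d : ℝ) ^ 2 * ε ≤ 2 / 3)
    (hentry : ∀ i j, ‖E i j‖ ≤ ε)
    (hdet : (1 + E).det = 1) :
    ‖E.trace‖ ≤ 3 * (d.factorial : ℝ) * ε ^ 2 := by
  have hd2 : (2 : ℝ) ≤ (d : ℝ) := by exact_mod_cast hd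
  have hd4 : (4 : ℝ) ≤ (d : ℝ) ^ 2 := by nlinarith
  have hε6 : ε ≤ 1 / 6 := by nlinarith
  have hdε : (d : ℝ) * ε ≤ 1 / 3 := by nlinarith
  have hd2ε2 : (d : ℝ) ^ 2 * ε ^ 2 ≤ 1 / 9 := by nlinarith
  have h139 : (1 + ε) ^ d ≤ 13 / 9 := by
    have := pow_aux hε d (by linarith)
    nlinarith
  -- notation
  set f : Equiv.Perm (Fin d) → ℂ :=
    fun σ => Equiv.Perm.sign σ • ∏ i, (1 + E) (σ i) i with hf
  have hdet2 : ∑ σ : Equiv.Perm (Fin d), f σ = 1 := by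
    rw [← Matrix.det_apply, hdet]
  have hsplit : f 1 + ∑ σ ∈ Finset.univ.erase 1, f σ = 1 := by
    rw [Finset.add_sum_erase _ f (Finset.mem_univ 1), hdet2]
  have hf1 : f 1 = ∏ i, (1 + E i i) := by
    simp only [hf, _root_.map_one, one_smul]
    exact Finset.prod_congr rfl fun i _ => by simp [Matrix.add_apply, Matrix.one_apply_eq]
  -- identity permutation part
  have hidbound : ‖(∏ i, (1 + E i i)) - (1 + E.trace)‖
      ≤ (1 + ε) ^ d - 1 - d * ε := by
    have := list_prod_one_add_sub_one_sub_sum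
      (Finset.univ.toList.map (fun i : Fin d => E i i))
      (by
        intro A hA
        simp only [List.mem_map] at hA
        obtain ⟨i, _, rfl⟩ := hA
        exact hentry i i)
    rw [List.map_map, Finset.prod_map_toList, Finset.sum_map_toList] at this
    simp only [List.length_map, Finset.length_toList, Finset.card_univ, Fintype.card_fin] at this
    have htr : E.trace = ∑ i, E i i := by simp [Matrix.trace, Matrix.diag]
    rw [htr]
    exact this
  have hperm : ∀ σ : Equiv.Perm (Fin d), σ ≠ 1 → ‖f σ‖ ≤ ε ^ 2 * (13 / 9) := by
    intro σ hσ
    have hnp : ‖∏ i, (1 + E) (σ i) i‖ = ∏ i, ‖(1 + E) (σ i) i‖ := norm_prod _ _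
    have hnormf : ‖f σ‖ = ∏ i, ‖(1 + E) (σ i) i‖ := by
      rcases Int.units_eq_one_or (Equiv.Perm.sign σ) with h | h <;>
        simp [hf, h, hnp]
    rw [hnormf]
    have hsupp2 : 2 ≤ σ.support.card := Equiv.Perm.one_lt_card_support_of_ne_one hσ
    rw [← Finset.prod_mul_prod_compl σ.support (fun i => ‖(1 + E) (σ i) i‖)]
    have hb1 : ∏ i ∈ σ.support, ‖(1 + E) (σ i) i‖ ≤ ε ^ σ.support.card := by
      rw [← Finset.prod_const]
      refine Finset.prod_le_prod (fun i _ => norm_nonneg _) fun i hi => ?_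
      have hne : σ i ≠ i := Equiv.Perm.mem_support.mp hi
      have heq : (1 + E) (σ i) i = E (σ i) i := by
        simp [Matrix.add_apply, Matrix.one_apply_ne hne]
      rw [heq]; exact hentry _ _
    have hb2 : ∏ i ∈ σ.supportᶜ, ‖(1 + E) (σ i) i‖ ≤ (1 + ε) ^ σ.supportᶜ.card := by
      rw [← Finset.prod_const]
      refine Finset.prod_le_prod (fun i _ => norm_nonneg _) fun i _ => ?_
      have h1le : ‖(1 : Matrix (Fin d) (Fin d) ℂ) (σ i) i‖ ≤ 1 := by
        rcases eq_or_ne (σ i) i with h | h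
        · rw [h, Matrix.one_apply_eq]; simp
        · rw [Matrix.one_apply_ne h]; simp
      calc ‖(1 + E) (σ i) i‖ ≤ ‖(1 : Matrix (Fin d) (Fin d) ℂ) (σ i) i‖ + ‖E (σ i) i‖ := by
            rw [Matrix.add_apply]; exact norm_add_le _ _
        _ ≤ 1 + ε := add_le_add h1le (hentry _ _)
    have h3 : ε ^ σ.support.card ≤ ε ^ 2 :=
      pow_le_pow_of_le_one hε (by linarith) hsupp2
    have h4 : (1 + ε) ^ σ.supportᶜ.card ≤ (1 + ε) ^ d := by
      apply pow_le_pow_right₀ (by linarith)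
      calc σ.supportᶜ.card ≤ Finset.univ.card := Finset.card_le_card (Finset.subset_univ _)
        _ = d := by simp
    calc (∏ i ∈ σ.support, ‖(1 + E) (σ i) i‖) * ∏ i ∈ σ.supportᶜ, ‖(1 + E) (σ i) i‖
        ≤ ε ^ 2 * (1 + ε) ^ d := by
          refine mul_le_mul (le_trans hb1 h3) (le_trans hb2 h4) ?_ (by positivity)
          exact Finset.prod_nonneg fun i _ => norm_nonneg _
      _ ≤ ε ^ 2 * (13 / 9) := by nlinarith [sq_nonneg ε]
  have h1f : 1 ≤ d.factorial := Nat.one_le_iff_ne_zero.mpr (Nat.factorial_pos d).ne'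
  have hR : ‖∑ σ ∈ Finset.univ.erase 1, f σ‖
      ≤ ((d.factorial : ℝ) - 1) * (ε ^ 2 * (13 / 9)) := by
    calc ‖∑ σ ∈ Finset.univ.erase 1, f σ‖ ≤ ∑ σ ∈ Finset.univ.erase 1, ‖f σ‖ :=
          norm_sum_le _ _
      _ ≤ ∑ _σ ∈ Finset.univ.erase (1 : Equiv.Perm (Fin d)), ε ^ 2 * (13 / 9) :=
          Finset.sum_le_sum fun σ hσ => hperm σ (Finset.ne_of_mem_erase hσ)
      _ = ((Finset.univ.erase (1 : Equiv.Perm (Fin d))).card : ℝ) * (ε ^ 2 * (13 / 9)) := by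
          rw [Finset.sum_const, nsmul_eq_mul]
      _ = ((d.factorial : ℝ) - 1) * (ε ^ 2 * (13 / 9)) := by
          rw [Finset.card_erase_of_mem (Finset.mem_univ _), Finset.card_univ,
            Fintype.card_perm, Fintype.card_fin, Nat.cast_sub h1f, Nat.cast_one]
  have hkey : E.trace = -((∏ i, (1 + E i i)) - (1 + E.trace))
      - ∑ σ ∈ Finset.univ.erase 1, f σ := by
    rw [hf1] at hsplit
    linear_combination hsplit
  have h1fr : (1 : ℝ) ≤ (d.factorial : ℝ) := by exact_mod_cast h1f
  have hfd : (9 : ℝ) * (d : ℝ) ^ 2 ≤ 14 * (d.factorial : ℝ) + 13 := by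
    exact_mod_cast nat_fact2 d hd
  have hpow := pow_aux hε d (by linarith)
  calc ‖E.trace‖
      = ‖-((∏ i, (1 + E i i)) - (1 + E.trace)) - ∑ σ ∈ Finset.univ.erase 1, f σ‖ := by
        rw [← hkey]
    _ ≤ ‖-((∏ i, (1 + E i i)) - (1 + E.trace))‖ + ‖∑ σ ∈ Finset.univ.erase 1, f σ‖ :=
        norm_sub_le _ _
    _ = ‖(∏ i, (1 + E i i)) - (1 + E.trace)‖ + ‖∑ σ ∈ Finset.univ.erase 1, f σ‖ := by
        rw [norm_neg]
    _ ≤ ((1 + ε) ^ d - 1 - d * ε) + ((d.factorial : ℝ) - 1) * (ε ^ 2 * (13 / 9)) :=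
        add_le_add hidbound hR
    _ ≤ 3 * (d.factorial : ℝ) * ε ^ 2 := by
        have hkey2 : (0 : ℝ) ≤ (14 * (d.factorial : ℝ) + 13 - 9 * (d : ℝ) ^ 2) * ε ^ 2 :=
          mul_nonneg (by linarith) (sq_nonneg ε)
        nlinarith [sq_nonneg ε]

set_option maxHeartbeats 1000000 in
/-- Quadratic error reduction for the group-averaging map `f(W) = ∏_g ρ(g) W ρ(g)†`
(product in a fixed order ending with the identity element of `G`), for an
irreducible special-unitary representation of a finite group with `d ≥ 2`. -/
theorem stmt_5 (d : ℕ) (hd : 2 ≤ d) (G : Type*) [Group G] [Fintype G]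
    (ρ : G →* Matrix.specialUnitaryGroup (Fin d) ℂ)
    (hirr : ∀ N : Matrix (Fin d) (Fin d) ℂ,
      (∀ g : G, (ρ g : Matrix (Fin d) (Fin d) ℂ) * N = N * ρ g) → ∃ c : ℂ, N = c • 1)
    (l : List G) (hnodup : l.Nodup) (hall : ∀ g : G, g ∈ l) (hlast : l.getLast? = some 1)
    (ε₀ : ℝ)
    (hε₀ : ε₀ = 1 / (6 * (Fintype.card G : ℝ) * ((d - 1).factorial : ℝ)
        + 2 * (Fintype.card G : ℝ) ^ 2))
    (W : Matrix (Fin d) (Fin d) ℂ) (hW : W ∈ Matrix.specialUnitaryGroup (Fin d) ℂ)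
    (hWI : ‖W - 1‖ ≤ ε₀) :
    ‖(l.map (fun g => (ρ g : Matrix (Fin d) (Fin d) ℂ) * W
        * (ρ g : Matrix (Fin d) (Fin d) ℂ)ᴴ)).prod - 1‖
      ≤ (3 * (Fintype.card G : ℝ) * ((d - 1).factorial : ℝ)
          + (Fintype.card G : ℝ) ^ 2) * ‖W - 1‖ ^ 2
    ∧ (3 * (Fintype.card G : ℝ) * ((d - 1).factorial : ℝ)
          + (Fintype.card G : ℝ) ^ 2) * ‖W - 1‖ ^ 2 ≤ ε₀ / 2 := by
  classical
  haveI : Nonempty (Fin d) := ⟨⟨0, by omega⟩⟩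
  haveI : Nontrivial (Matrix (Fin d) (Fin d) ℂ) := by
    refine ⟨1, 0, fun h => ?_⟩
    have h0 := congrFun (congrFun h ⟨0, by omega⟩) ⟨0, by omega⟩
    rw [Matrix.one_apply_eq] at h0
    exact one_ne_zero h0
  set n := Fintype.card G with hn
  have hn1 : 1 ≤ n := Fintype.card_pos
  set F := (d - 1).factorial with hF
  have hF1 : 1 ≤ F := Nat.factorial_pos _
  set E := W - 1 with hE
  set ε := ‖E‖ with hεdef
  have hεnn : 0 ≤ ε := norm_nonneg _
  have hWE : W = 1 + E := by rw [hE]; abel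
  -- numeric setup
  have hn1R : (1 : ℝ) ≤ (n : ℝ) := by exact_mod_cast hn1
  have hF1R : (1 : ℝ) ≤ (F : ℝ) := by exact_mod_cast hF1
  have hDpos : (0 : ℝ) < 6 * n * F + 2 * (n : ℝ) ^ 2 := by nlinarith
  have hεD : ε * (6 * n * F + 2 * (n : ℝ) ^ 2) ≤ 1 := by
    rw [hε₀] at hWI
    calc ε * (6 * n * F + 2 * (n : ℝ) ^ 2)
        ≤ (1 / (6 * n * F + 2 * (n : ℝ) ^ 2)) * (6 * n * F + 2 * (n : ℝ) ^ 2) := by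
          apply mul_le_mul_of_nonneg_right hWI hDpos.le
      _ = 1 := by field_simp
  have hnat1 : (3 : ℝ) * (d : ℝ) ^ 2 ≤ 12 * F + 4 := by exact_mod_cast nat_fact1 d hd
  have hn2ε : (n : ℝ) ^ 2 * ε ≤ 1 := by nlinarith
  have hd2ε : (d : ℝ) ^ 2 * ε ≤ 2 / 3 := by nlinarith
  -- unitarity facts
  have hρu : ∀ g : G, (ρ g : Matrix (Fin d) (Fin d) ℂ) ∈ unitary (Matrix (Fin d) (Fin d) ℂ) :=
    fun g => ((Matrix.mem_specialUnitaryGroup_iff.mp (ρ g).2).1 : _)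
  have hρnorm : ∀ g : G, ‖(ρ g : Matrix (Fin d) (Fin d) ℂ)‖ = 1 :=
    fun g => CStarRing.norm_of_mem_unitary (hρu g)
  have hρstar : ∀ g : G,
      (ρ g : Matrix (Fin d) (Fin d) ℂ) * (ρ g : Matrix (Fin d) (Fin d) ℂ)ᴴ = 1 := by
    intro g
    have := (Unitary.mem_iff.mp (hρu g)).2
    simpa [Matrix.star_eq_conjTranspose] using this
  have hρstar' : ∀ g : G,
      (ρ g : Matrix (Fin d) (Fin d) ℂ)ᴴ * (ρ g : Matrix (Fin d) (Fin d) ℂ) = 1 := by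
    intro g
    have := (Unitary.mem_iff.mp (hρu g)).1
    simpa [Matrix.star_eq_conjTranspose] using this
  set A : G → Matrix (Fin d) (Fin d) ℂ :=
    fun g => (ρ g : Matrix (Fin d) (Fin d) ℂ) * E * (ρ g : Matrix (Fin d) (Fin d) ℂ)ᴴ with hA
  have hmap : (l.map (fun g => (ρ g : Matrix (Fin d) (Fin d) ℂ) * W
      * (ρ g : Matrix (Fin d) (Fin d) ℂ)ᴴ)) = (l.map A).map (fun B => 1 + B) := by
    rw [List.map_map]
    refine List.map_congr_left fun g _ => ?_
    show (ρ g : Matrix (Fin d) (Fin d) ℂ) * W * (ρ g : Matrix (Fin d) (Fin d) ℂ)ᴴ = 1 + A g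
    rw [hWE, mul_add, mul_one, add_mul, hρstar g, hA]
  have hAnorm : ∀ B ∈ l.map A, ‖B‖ ≤ ε := by
    intro B hB
    obtain ⟨g, _, rfl⟩ := List.mem_map.mp hB
    calc ‖A g‖ ≤ ‖(ρ g : Matrix (Fin d) (Fin d) ℂ) * E‖
          * ‖(ρ g : Matrix (Fin d) (Fin d) ℂ)ᴴ‖ := norm_mul_le _ _
      _ ≤ ‖(ρ g : Matrix (Fin d) (Fin d) ℂ)‖ * ‖E‖
          * ‖(ρ g : Matrix (Fin d) (Fin d) ℂ)ᴴ‖ := by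
          gcongr
          exact norm_mul_le _ _
      _ = ε := by
          rw [Matrix.l2_opNorm_conjTranspose, hρnorm g]; ring
  have htofin : l.toFinset = Finset.univ :=
    Finset.eq_univ_iff_forall.mpr fun g => List.mem_toFinset.mpr (hall g)
  have hlen : l.length = n := by
    rw [← List.toFinset_card_of_nodup hnodup, htofin, Finset.card_univ]
  have hsum : (l.map A).sum = ∑ g : G, A g := by
    rw [← List.sum_toFinset A hnodup, htofin]
  set S := ∑ g : G, A g with hS
  -- Schur's lemma
  have hconj : ∀ h : G, (ρ h : Matrix (Fin d) (Fin d) ℂ) * S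
      = S * (ρ h : Matrix (Fin d) (Fin d) ℂ) := by
    intro h
    have hAg : ∀ g : G, (ρ h : Matrix (Fin d) (Fin d) ℂ) * A g
        = A (h * g) * (ρ h : Matrix (Fin d) (Fin d) ℂ) := by
      intro g
      have hmul : (ρ (h * g) : Matrix (Fin d) (Fin d) ℂ)
          = (ρ h : Matrix (Fin d) (Fin d) ℂ) * (ρ g : Matrix (Fin d) (Fin d) ℂ) := by
        rw [_root_.map_mul]; rfl
      show (ρ h : Matrix (Fin d) (Fin d) ℂ) * ((ρ g : Matrix (Fin d) (Fin d) ℂ) * E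
          * (ρ g : Matrix (Fin d) (Fin d) ℂ)ᴴ)
        = (ρ (h * g) : Matrix (Fin d) (Fin d) ℂ) * E
          * (ρ (h * g) : Matrix (Fin d) (Fin d) ℂ)ᴴ * (ρ h : Matrix (Fin d) (Fin d) ℂ)
      rw [hmul, Matrix.conjTranspose_mul]
      simp only [mul_assoc]
      rw [hρstar' h, mul_one]
    calc (ρ h : Matrix (Fin d) (Fin d) ℂ) * S
        = ∑ g : G, (ρ h : Matrix (Fin d) (Fin d) ℂ) * A g := Finset.mul_sum _ _ _
      _ = ∑ g : G, A (h * g) * (ρ h : Matrix (Fin d) (Fin d) ℂ) := by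
          exact Finset.sum_congr rfl fun g _ => hAg g
      _ = (∑ g : G, A (h * g)) * (ρ h : Matrix (Fin d) (Fin d) ℂ) :=
          (Finset.sum_mul _ _ _).symm
      _ = S * (ρ h : Matrix (Fin d) (Fin d) ℂ) := by
          rw [Fintype.sum_equiv (Equiv.mulLeft h) (fun g => A (h * g)) A fun g => rfl]
  obtain ⟨c, hc⟩ := hirr S hconj
  -- traces
  have htrA : ∀ g : G, (A g).trace = E.trace := by
    intro g
    calc ((ρ g : Matrix (Fin d) (Fin d) ℂ) * E * (ρ g : Matrix (Fin d) (Fin d) ℂ)ᴴ).trace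
        = ((ρ g : Matrix (Fin d) (Fin d) ℂ)ᴴ
            * ((ρ g : Matrix (Fin d) (Fin d) ℂ) * E)).trace := Matrix.trace_mul_comm _ _
      _ = E.trace := by rw [← mul_assoc, hρstar' g, one_mul]
  have htrS : S.trace = (n : ℂ) * E.trace := by
    rw [hS, Matrix.trace_sum]
    simp only [htrA]
    rw [Finset.sum_const, Finset.card_univ, nsmul_eq_mul, hn]
  have htrc : c * (d : ℂ) = (n : ℂ) * E.trace := by
    rw [← htrS, hc, Matrix.trace_smul, Matrix.trace_one, smul_eq_mul]
    norm_num
  -- determinant of W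
  have hdet : (1 + E).det = 1 := by
    rw [← hWE]
    exact (Matrix.mem_specialUnitaryGroup_iff.mp hW).2
  have htr := trace_bound hd hεnn hd2ε (fun i j => entry_le_l2_opNorm E i j) hdet
  -- factorial relation
  have hdF : (d.factorial : ℝ) = (d : ℝ) * F := by
    rw [hF]
    rw [← Nat.mul_factorial_pred (by omega : d ≠ 0)]
    push_cast
    ring
  have hdpos : (0 : ℝ) < (d : ℝ) := by exact_mod_cast (by omega : 0 < d)
  -- bound on the norm of S
  have hScnorm : ‖S‖ = ‖c‖ := by
    rw [hc, norm_smul, norm_one, mul_one]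
  have hcd : ‖c‖ * (d : ℝ) = (n : ℝ) * ‖E.trace‖ := by
    have h := congrArg norm htrc
    rwa [norm_mul, norm_mul, Complex.norm_natCast, Complex.norm_natCast] at h
  have hSle : ‖S‖ ≤ 3 * (n : ℝ) * (F : ℝ) * ε ^ 2 := by
    rw [hScnorm]
    have htr' : ‖E.trace‖ ≤ 3 * ((d : ℝ) * (F : ℝ)) * ε ^ 2 := by
      rw [← hdF]; exact htr
    have h1 : ‖c‖ * (d : ℝ) ≤ (3 * (n : ℝ) * (F : ℝ) * ε ^ 2) * (d : ℝ) := by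
      rw [hcd]
      calc (n : ℝ) * ‖E.trace‖ ≤ (n : ℝ) * (3 * ((d : ℝ) * (F : ℝ)) * ε ^ 2) := by
            gcongr
        _ = (3 * (n : ℝ) * (F : ℝ) * ε ^ 2) * (d : ℝ) := by ring
    exact le_of_mul_le_mul_right h1 hdpos
  have hlist := list_prod_one_add_sub_one_sub_sum (l.map A) hAnorm
  rw [List.length_map, hlen, hsum] at hlist
  have hpow := pow_aux hεnn n hn2ε
  constructor
  · rw [hmap]
    have hsplit2 : ((l.map A).map (fun B => 1 + B)).prod - 1
        = (((l.map A).map (fun B => 1 + B)).prod - (1 + S)) + S := by abel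
    rw [hsplit2]
    calc ‖(((l.map A).map (fun B => 1 + B)).prod - (1 + S)) + S‖
        ≤ ‖((l.map A).map (fun B => 1 + B)).prod - (1 + S)‖ + ‖S‖ := norm_add_le _ _
      _ ≤ ((1 + ε) ^ n - 1 - n * ε) + 3 * (n : ℝ) * (F : ℝ) * ε ^ 2 :=
          add_le_add hlist hSle
      _ ≤ (3 * (n : ℝ) * (F : ℝ) + (n : ℝ) ^ 2) * ε ^ 2 := by nlinarith
  · have hkey : (6 * (n : ℝ) * (F : ℝ) + 2 * (n : ℝ) ^ 2) * ε ^ 2 ≤ ε := by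
      nlinarith
    nlinarith
end

section
/- If W ∈ SU(d) with ‖W − I‖ ≤ ε and ρ is a d-dimensional irreducible unitary representation of a finite group G, then ‖∑_{g∈G} ρ(g)(W − I)ρ(g)†‖ ≤ |G| · ((2^d + d!)/d) · ε². -/
open Matrix
open scoped Matrix.Norms.L2Operator

section AuxStmt7
open Polynomial

theorem root_mem_spectrum_s7 (d : ℕ) (W : Matrix (Fin d) (Fin d) ℂ) (lam : ℂ)
    (h : W.charpoly.IsRoot lam) : lam ∈ spectrum ℂ W := by
  rw [spectrum.mem_iff, Matrix.isUnit_iff_isUnit_det]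
  have : W.charpoly.eval lam = ((algebraMap ℂ (Matrix (Fin d) (Fin d) ℂ)) lam - W).det := by
    rw [Matrix.charpoly, _root_.eval_det, Matrix.matPolyEquiv_charmatrix]
    rw [eval_sub, eval_X, eval_C]
    congr 1
  rw [Polynomial.IsRoot, this] at h
  rw [h]
  exact not_isUnit_zero

theorem trace_bound_s7 (d : ℕ) (hd : 0 < d) (W : Matrix (Fin d) (Fin d) ℂ) (hdet : W.det = 1) :
    ‖Matrix.trace (W - 1)‖ ≤ ((2:ℝ)^d + (d.factorial : ℝ)) * ‖W - 1‖^2 := by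
  haveI : Nonempty (Fin d) := ⟨⟨0, hd⟩⟩
  set ε₀ : ℝ := ‖W - 1‖ with hε₀
  have h0 : 0 ≤ ε₀ := norm_nonneg _
  -- roots of charpoly
  set l : List ℂ := W.charpoly.roots.toList with hl
  have hlist : (l : Multiset ℂ) = W.charpoly.roots := Multiset.coe_toList _
  have hlen : l.length = d := by
    have h1 : W.charpoly.natDegree = Multiset.card W.charpoly.roots := by
      exact (Polynomial.splits_iff_card_roots.mp (IsAlgClosed.splits W.charpoly)).symm
    have h2 : W.charpoly.natDegree = d := by
      rw [Matrix.charpoly_natDegree_eq_dim, Fintype.card_fin]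
    have : (l.length : ℕ) = Multiset.card W.charpoly.roots := by
      rw [← hlist]; simp
    omega
  have hsum : Matrix.trace W = l.sum := by
    rw [Matrix.trace_eq_sum_roots_charpoly, ← hlist]; simp
  have hprod : l.prod = 1 := by
    have := Matrix.det_eq_prod_roots_charpoly (A := W)
    rw [hdet, ← hlist] at this
    simp at this
    exact this.symm
  -- each root close to 1
  have hroot : ∀ x ∈ l, ‖x - 1‖ ≤ ε₀ := by
    intro x hx
    have hxr : W.charpoly.IsRoot x := by
      have : x ∈ W.charpoly.roots := by rw [← hlist]; exact_mod_cast hx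
      exact (Polynomial.mem_roots (Matrix.charpoly_monic W).ne_zero).1 this
    have hspec : x ∈ spectrum ℂ W := root_mem_spectrum_s7 d W x hxr
    have hspec' : x - 1 ∈ spectrum ℂ (W - 1) := by
      rw [spectrum.mem_iff] at hspec ⊢
      convert hspec using 2
      rw [map_sub]
      simp only [_root_.map_one]
      abel
    exact spectrum.norm_le_norm_of_mem hspec'
  -- indexed version
  set n := l.length with hn
  set ν : Fin n → ℂ := fun i => l[i.1] - 1 with hν
  have hνbound : ∀ i, ‖ν i‖ ≤ ε₀ := fun i => hroot _ (l.get_mem _)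
  have htr : Matrix.trace (W - 1) = ∑ i, ν i := by
    have : (∑ i : Fin n, ν i) = (∑ i : Fin n, l[i.1]) - n := by
      rw [Finset.sum_sub_distrib]; simp
    have hcard : (Fintype.card (Fin d) : ℂ) = (n : ℂ) := by
      rw [Fintype.card_fin, ← hlen]
    rw [Matrix.trace_sub, Matrix.trace_one, hsum, this, Fin.sum_univ_getElem, hcard]
  have hid : (1 : ℂ) = ∑ t ∈ (Finset.univ : Finset (Fin n)).powerset, ∏ i ∈ t, ν i := by
    have := Finset.prod_add ν (fun _ => (1:ℂ)) Finset.univ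
    simp only [Finset.prod_const_one, mul_one] at this
    rw [← this]
    have : ∀ i : Fin n, ν i + 1 = l[i.1] := by intro i; simp [hν]
    rw [Finset.prod_congr rfl (fun i _ => this i), Fin.prod_univ_getElem, hprod]
  set P := (Finset.univ : Finset (Fin n)).powerset with hP
  set F := P.filter (fun t => 2 ≤ t.card) with hF
  have hsmall : ∑ t ∈ P.filter (fun t => ¬ 2 ≤ t.card), ∏ i ∈ t, ν i = 1 + ∑ i, ν i := by
    have hset : P.filter (fun t => ¬ 2 ≤ t.card)
        = insert (∅ : Finset (Fin n)) (Finset.univ.image fun i => ({i} : Finset (Fin n))) := by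
      ext t
      simp only [hP, Finset.mem_filter, Finset.mem_powerset, Finset.mem_insert, Finset.mem_image,
        Finset.mem_univ, true_and, not_le]
      constructor
      · rintro ⟨-, h2⟩
        have : t.card = 0 ∨ t.card = 1 := by omega
        rcases this with h | h
        · exact Or.inl (Finset.card_eq_zero.mp h)
        · obtain ⟨a, ha⟩ := Finset.card_eq_one.mp h
          exact Or.inr ⟨a, ha.symm⟩
      · rintro (rfl | ⟨a, rfl⟩)
        · exact ⟨Finset.empty_subset _, by simp⟩
        · exact ⟨Finset.subset_univ _, by simp⟩
    rw [hset, Finset.sum_insert (by simp), Finset.sum_image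
      (fun i _ j _ h => Finset.singleton_injective h)]
    simp
  have hkey : ∑ i, ν i = - ∑ t ∈ F, ∏ i ∈ t, ν i := by
    have h := Finset.sum_filter_add_sum_filter_not P (fun t => 2 ≤ t.card) (fun t => ∏ i ∈ t, ν i)
    rw [hsmall, ← hid] at h
    linear_combination h
  have hFcard : (F.card : ℝ) ≤ 2 ^ d := by
    have h1 : F.card ≤ P.card := Finset.card_filter_le _ _
    have h2 : P.card = 2 ^ d := by
      rw [hP, Finset.card_powerset, Finset.card_univ, Fintype.card_fin, hlen]
    have : F.card ≤ 2 ^ d := h2 ▸ h1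
    exact_mod_cast this
  have hfinal : ‖∑ i, ν i‖ ≤ (2:ℝ) ^ d * ε₀ ^ 2 := by
    rcases le_or_gt ε₀ 1 with hle | hgt
    · calc ‖∑ i, ν i‖ = ‖∑ t ∈ F, ∏ i ∈ t, ν i‖ := by rw [hkey, norm_neg]
        _ ≤ ∑ t ∈ F, ‖∏ i ∈ t, ν i‖ := norm_sum_le _ _
        _ ≤ ∑ t ∈ F, ε₀ ^ 2 := by
            refine Finset.sum_le_sum fun t ht => ?_
            have h2 : 2 ≤ t.card := (Finset.mem_filter.mp ht).2
            calc ‖∏ i ∈ t, ν i‖ = ∏ i ∈ t, ‖ν i‖ := norm_prod _ _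
              _ ≤ ∏ _i ∈ t, ε₀ := Finset.prod_le_prod (fun i _ => norm_nonneg _)
                  (fun i _ => hνbound i)
              _ = ε₀ ^ t.card := Finset.prod_const _
              _ ≤ ε₀ ^ 2 := pow_le_pow_of_le_one h0 hle h2
        _ = F.card * ε₀ ^ 2 := by rw [Finset.sum_const, nsmul_eq_mul]
        _ ≤ (2:ℝ) ^ d * ε₀ ^ 2 := by
            exact mul_le_mul_of_nonneg_right hFcard (sq_nonneg _)
    · have hd2 : (d : ℝ) ≤ 2 ^ d := by
        exact_mod_cast (Nat.lt_two_pow_self (n := d)).le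
      calc ‖∑ i, ν i‖ ≤ ∑ i, ‖ν i‖ := norm_sum_le _ _
        _ ≤ ∑ _i : Fin n, ε₀ := Finset.sum_le_sum fun i _ => hνbound i
        _ = (d : ℝ) * ε₀ := by
            rw [Finset.sum_const, nsmul_eq_mul, Finset.card_univ, Fintype.card_fin, hlen]
        _ ≤ 2 ^ d * ε₀ := mul_le_mul_of_nonneg_right hd2 h0
        _ ≤ 2 ^ d * ε₀ ^ 2 := mul_le_mul_of_nonneg_left (by nlinarith)
            (pow_nonneg (by norm_num) d)
  calc ‖Matrix.trace (W - 1)‖ = ‖∑ i, ν i‖ := by rw [htr]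
    _ ≤ (2:ℝ) ^ d * ε₀ ^ 2 := hfinal
    _ ≤ ((2:ℝ)^d + (d.factorial : ℝ)) * ε₀ ^ 2 := by
        have : (0:ℝ) ≤ (d.factorial : ℝ) := Nat.cast_nonneg _
        nlinarith [sq_nonneg ε₀]

end AuxStmt7

/-- First-order term bound: if `W` is special unitary with `‖W − I‖ ≤ ε` and `ρ` is
an irreducible unitary representation, then
`‖∑_g ρ(g)(W−I)ρ(g)†‖ ≤ |G|·((2^d + d!)/d)·ε²`. -/
theorem stmt_7 (d : ℕ) (hd : 0 < d) (G : Type*) [Group G] [Fintype G]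
    (ρ : G →* Matrix.unitaryGroup (Fin d) ℂ)
    (hirr : ∀ N : Matrix (Fin d) (Fin d) ℂ,
      (∀ g : G, (ρ g : Matrix (Fin d) (Fin d) ℂ) * N = N * ρ g) → ∃ c : ℂ, N = c • 1)
    (W : Matrix (Fin d) (Fin d) ℂ) (hW : W ∈ Matrix.specialUnitaryGroup (Fin d) ℂ)
    (ε : ℝ) (hε : ‖W - 1‖ ≤ ε) :
    ‖∑ g : G, (ρ g : Matrix (Fin d) (Fin d) ℂ) * (W - 1)
        * (ρ g : Matrix (Fin d) (Fin d) ℂ)ᴴ‖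
      ≤ (Fintype.card G : ℝ) * (((2 : ℝ) ^ d + (d.factorial : ℝ)) / d) * ε ^ 2 := by
  haveI : Nonempty (Fin d) := ⟨⟨0, hd⟩⟩
  set M : Matrix (Fin d) (Fin d) ℂ := W - 1 with hM
  set S : Matrix (Fin d) (Fin d) ℂ :=
    ∑ g : G, (ρ g : Matrix (Fin d) (Fin d) ℂ) * M * (ρ g : Matrix (Fin d) (Fin d) ℂ)ᴴ with hS
  have hU : ∀ g : G, ((ρ g : Matrix (Fin d) (Fin d) ℂ))ᴴ * (ρ g : Matrix (Fin d) (Fin d) ℂ) = 1 := by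
    intro g
    have := (Unitary.mem_iff.mp (ρ g).2).1
    rwa [Matrix.star_eq_conjTranspose] at this
  have hcomm : ∀ h : G, (ρ h : Matrix (Fin d) (Fin d) ℂ) * S = S * ρ h := by
    intro h
    calc (ρ h : Matrix (Fin d) (Fin d) ℂ) * S
        = ∑ g : G, (ρ h : Matrix (Fin d) (Fin d) ℂ)
            * ((ρ g : Matrix (Fin d) (Fin d) ℂ) * M * (ρ g : Matrix (Fin d) (Fin d) ℂ)ᴴ) := by
          rw [hS, Finset.mul_sum]
      _ = ∑ g : G, ((ρ (h * g) : Matrix (Fin d) (Fin d) ℂ) * M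
            * (ρ (h * g) : Matrix (Fin d) (Fin d) ℂ)ᴴ) * ρ h := by
          refine Finset.sum_congr rfl fun g _ => ?_
          have hmul : (ρ (h * g) : Matrix (Fin d) (Fin d) ℂ)
              = (ρ h : Matrix (Fin d) (Fin d) ℂ) * ρ g := by
            rw [_root_.map_mul]; rfl
          rw [hmul, Matrix.conjTranspose_mul]
          simp only [Matrix.mul_assoc]
          rw [hU h, Matrix.mul_one]
      _ = (∑ g : G, (ρ (h * g) : Matrix (Fin d) (Fin d) ℂ) * M
            * (ρ (h * g) : Matrix (Fin d) (Fin d) ℂ)ᴴ) * ρ h := by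
          rw [Finset.sum_mul]
      _ = S * ρ h := by
          congr 1
          rw [hS]
          exact Fintype.sum_bijective (fun g => h * g) (Group.mulLeft_bijective h) _ _
            (fun g => rfl)
  obtain ⟨c, hc⟩ := hirr S hcomm
  have htrS : S.trace = (Fintype.card G : ℂ) * M.trace := by
    rw [hS, Matrix.trace_sum]
    have hterm : ∀ g : G, ((ρ g : Matrix (Fin d) (Fin d) ℂ) * M
        * (ρ g : Matrix (Fin d) (Fin d) ℂ)ᴴ).trace = M.trace := by
      intro g
      rw [Matrix.trace_mul_cycle, hU g, Matrix.one_mul]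
    rw [Finset.sum_congr rfl (fun g _ => hterm g), Finset.sum_const, nsmul_eq_mul,
      Finset.card_univ]
  have htrc : S.trace = c * d := by
    rw [hc, Matrix.trace_smul, Matrix.trace_one, Fintype.card_fin, smul_eq_mul]
  have hnormS : ‖S‖ = ‖c‖ := by
    rw [hc, norm_smul, CStarRing.norm_one, mul_one]
  have hdet : W.det = 1 := (Matrix.mem_specialUnitaryGroup_iff.mp hW).2
  have htb : ‖M.trace‖ ≤ ((2:ℝ)^d + (d.factorial : ℝ)) * ε ^ 2 := by
    calc ‖M.trace‖ ≤ ((2:ℝ)^d + (d.factorial : ℝ)) * ‖W - 1‖ ^ 2 := trace_bound_s7 d hd W hdet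
      _ ≤ ((2:ℝ)^d + (d.factorial : ℝ)) * ε ^ 2 := by
          gcongr
  have hcd : ‖c‖ * d = (Fintype.card G : ℝ) * ‖M.trace‖ := by
    have h1 := congrArg (fun z : ℂ => ‖z‖) (htrc.symm.trans htrS)
    simpa [norm_mul, Complex.norm_natCast] using h1
  have hdpos : (0:ℝ) < d := by exact_mod_cast hd
  rw [hnormS]
  rw [show (Fintype.card G : ℝ) * (((2 : ℝ) ^ d + (d.factorial : ℝ)) / d) * ε ^ 2
      = ((Fintype.card G : ℝ) * (((2 : ℝ) ^ d + (d.factorial : ℝ)) * ε ^ 2)) / d by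
    field_simp]
  rw [le_div_iff₀ hdpos]
  calc ‖c‖ * d = (Fintype.card G : ℝ) * ‖M.trace‖ := hcd
    _ ≤ (Fintype.card G : ℝ) * (((2 : ℝ) ^ d + (d.factorial : ℝ)) * ε ^ 2) := by
        gcongr
end
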